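/- Let N ≥ 2 be an integer. Let U₁, …, U_N be i.i.d. real random variables with E(U₁⁴) < ∞, and let W₁, …, W_N be i.i.d. square-integrable real random variables such that the vector (U₁,…,U_N) is independent of the vector (W₁,…,W_N). Set Ū = (1/N)Σ_i U_i, W̄ = (1/N)Σ_i W_i, B_i = U_i − Ū and C_i = W_i − W̄, and define T = (1/(N−1)) Σ_{i=1}^{N} (B_i + C_i)·B_i. Then E(T²) ≥ (1/(N−1)) · Var(U₁) · Var(W₁). -/

import Mathlib

open MeasureTheory ProbabilityTheory

noncomputable def ctr (N : ℕ) (u : Fin N → ℝ) (i : Fin N) : ℝ := u i - (N:ℝ)⁻¹ * ∑ j, u j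
noncomputable def ssq (N : ℕ) (u : Fin N → ℝ) : ℝ := ∑ i, ctr N u i * ctr N u i

lemma ctr_meas (N : ℕ) (i : Fin N) : Measurable (fun u => ctr N u i) := by
  unfold ctr; fun_prop

lemma ssq_meas (N : ℕ) : Measurable (ssq N) := by
  unfold ssq ctr; fun_prop

lemma L2mul {Ω : Type*} [MeasurableSpace Ω] {μ : Measure Ω} {f g : Ω → ℝ}
    (hf : MemLp f 2 μ) (hg : MemLp g 2 μ) : Integrable (fun ω => f ω * g ω) μ :=
  memLp_one_iff_integrable.mp (hg.smul hf (hpqr := ⟨by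
    simp only [one_div, inv_one]; rw [ENNReal.inv_two_add_inv_two]⟩))

lemma L4mul {Ω : Type*} [MeasurableSpace Ω] {μ : Measure Ω} {f g : Ω → ℝ}
    (hf : MemLp f 4 μ) (hg : MemLp g 4 μ) : MemLp (fun ω => f ω * g ω) 2 μ :=
  hg.smul hf (hpqr := ⟨by
    rw [eq_comm]
    rw [← two_mul, show (4:ENNReal) = 2*2 by norm_num,
      ENNReal.mul_inv (by norm_num) (by norm_num), ← mul_assoc,
      ENNReal.mul_inv_cancel (by norm_num) (by norm_num), one_mul]⟩)

lemma sum_ite_fin (N : ℕ) (i : Fin N) (a b : ℝ) :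
    ∑ l : Fin N, (if i = l then a else b) = a + ((N:ℝ)-1)*b := by
  have h : ∀ l : Fin N, (if i = l then a else b) = b + (if i = l then a - b else 0) := by
    intro l; split_ifs <;> ring
  simp only [h, Finset.sum_add_distrib, Finset.sum_const, Finset.card_univ, Fintype.card_fin,
    Finset.sum_ite_eq, Finset.mem_univ, if_true, nsmul_eq_mul]
  ring

lemma sum_ite_fin' (N : ℕ) (j : Fin N) (a b : ℝ) :
    ∑ k : Fin N, (if k = j then a else b) = a + ((N:ℝ)-1)*b := by
  rw [← sum_ite_fin N j a b]
  exact Finset.sum_congr rfl fun k _ => by simp [eq_comm]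

lemma moments_centered {Ω : Type*} [MeasurableSpace Ω] (μ : Measure Ω) [IsProbabilityMeasure μ]
    (N : ℕ) (hN : 1 ≤ N) (X : Fin N → Ω → ℝ) (hmeas : ∀ i, Measurable (X i))
    (hiid : iIndepFun X μ) (hid : ∀ i j, IdentDistrib (X i) (X j) μ μ)
    (h2 : ∀ i, MemLp (X i) 2 μ) (i0 i j : Fin N) :
    ∫ ω, ctr N (fun k => X k ω) i * ctr N (fun k => X k ω) j ∂μ
      = (if i = j then ∫ ω, X i0 ω * X i0 ω ∂μ else (∫ ω, X i0 ω ∂μ) * (∫ ω, X i0 ω ∂μ))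
        - ((∫ ω, X i0 ω * X i0 ω ∂μ) + ((N:ℝ)-1) * ((∫ ω, X i0 ω ∂μ) * (∫ ω, X i0 ω ∂μ))) / N := by
  have hNz : (N:ℝ) ≠ 0 := Nat.cast_ne_zero.mpr (by omega)
  set m := ∫ ω, X i0 ω ∂μ with hm
  set m2 := ∫ ω, X i0 ω * X i0 ω ∂μ with hm2
  have hInt : ∀ k l : Fin N, Integrable (fun ω => X k ω * X l ω) μ :=
    fun k l => L2mul (h2 k) (h2 l)
  have hmom : ∀ k l : Fin N, ∫ ω, X k ω * X l ω ∂μ = if k = l then m2 else m * m := by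
    intro k l
    by_cases h : k = l
    · subst h
      rw [if_pos rfl]
      exact ((hid k i0).comp (measurable_id.mul measurable_id)).integral_eq
    · rw [if_neg h]
      have hind := hiid.indepFun h
      have h1 : ∫ ω, X k ω * X l ω ∂μ = (∫ ω, X k ω ∂μ) * ∫ ω, X l ω ∂μ :=
        hind.integral_fun_mul_eq_mul_integral (hmeas k).aestronglyMeasurable (hmeas l).aestronglyMeasurable
      rw [h1, (hid k i0).integral_eq, (hid l i0).integral_eq]
  have hexp : (fun ω => ctr N (fun k => X k ω) i * ctr N (fun k => X k ω) j)
      = fun ω => X i ω * X j ω - (N:ℝ)⁻¹ * ∑ l, X i ω * X l ω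
          - (N:ℝ)⁻¹ * ∑ k, X k ω * X j ω
          + (N:ℝ)⁻¹ * ((N:ℝ)⁻¹ * ∑ k, ∑ l, X k ω * X l ω) := by
    funext ω
    simp only [ctr]
    rw [← Finset.mul_sum, ← Finset.sum_mul, ← Finset.sum_mul_sum]
    ring
  rw [hexp]
  have I1 := hInt i j
  have I2 : Integrable (fun ω => ∑ l, X i ω * X l ω) μ :=
    integrable_finset_sum _ fun l _ => hInt i l
  have I3 : Integrable (fun ω => ∑ k, X k ω * X j ω) μ :=
    integrable_finset_sum _ fun k _ => hInt k j
  have I4 : Integrable (fun ω => ∑ k, ∑ l, X k ω * X l ω) μ :=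
    integrable_finset_sum _ fun k _ => integrable_finset_sum _ fun l _ => hInt k l
  have I2' : Integrable (fun ω => (N:ℝ)⁻¹ * ∑ l, X i ω * X l ω) μ := by
    exact I2.const_mul _
  have I3' : Integrable (fun ω => (N:ℝ)⁻¹ * ∑ k, X k ω * X j ω) μ := by
    exact I3.const_mul _
  have I4' : Integrable (fun ω => (N:ℝ)⁻¹ * ((N:ℝ)⁻¹ * ∑ k, ∑ l, X k ω * X l ω)) μ := by
    exact (I4.const_mul _).const_mul _
  have I12 : Integrable (fun ω => X i ω * X j ω - (N:ℝ)⁻¹ * ∑ l, X i ω * X l ω) μ := by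
    exact I1.sub I2'
  have I123 : Integrable (fun ω => X i ω * X j ω - (N:ℝ)⁻¹ * ∑ l, X i ω * X l ω
      - (N:ℝ)⁻¹ * ∑ k, X k ω * X j ω) μ := by
    exact I12.sub I3'
  rw [integral_add I123 I4', integral_sub I12 I3', integral_sub I1 I2',
      integral_const_mul, integral_const_mul, integral_const_mul, integral_const_mul,
      integral_finset_sum _ (fun l _ => hInt i l),
      integral_finset_sum _ (fun k _ => hInt k j)]
  have hdouble : ∫ ω, ∑ k, ∑ l, X k ω * X l ω ∂μ = (N:ℝ) * (m2 + ((N:ℝ)-1)*(m*m)) := by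
    rw [integral_finset_sum _ (fun k _ => integrable_finset_sum _ fun l _ => hInt k l)]
    have : ∀ k : Fin N, ∫ ω, ∑ l, X k ω * X l ω ∂μ = m2 + ((N:ℝ)-1)*(m*m) := by
      intro k
      rw [integral_finset_sum _ (fun l _ => hInt k l)]
      simp only [hmom]
      exact sum_ite_fin N k m2 (m*m)
    simp only [this, Finset.sum_const, Finset.card_univ, Fintype.card_fin, nsmul_eq_mul]
  rw [hdouble]
  simp only [hmom]
  rw [sum_ite_fin N i m2 (m*m), sum_ite_fin' N j m2 (m*m)]
  field_simp
  ring

lemma key_sum (N : ℕ) (hN : 1 ≤ N) (a b a' b' : ℝ) :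
    ∑ i : Fin N, ∑ j : Fin N,
        (((if i = j then a else b) - (a + ((N:ℝ)-1)*b)/N)
          * ((if i = j then a' else b') - (a' + ((N:ℝ)-1)*b')/N))
      = ((N:ℝ)-1) * ((a - b) * (a' - b')) := by
  have hNz : (N:ℝ) ≠ 0 := Nat.cast_ne_zero.mpr (by omega)
  have hterm : ∀ i j : Fin N,
      (((if i = j then a else b) - (a + ((N:ℝ)-1)*b)/N)
        * ((if i = j then a' else b') - (a' + ((N:ℝ)-1)*b')/N))
      = if i = j then (a - (a + ((N:ℝ)-1)*b)/N) * (a' - (a' + ((N:ℝ)-1)*b')/N)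
        else (b - (a + ((N:ℝ)-1)*b)/N) * (b' - (a' + ((N:ℝ)-1)*b')/N) := by
    intro i j; split_ifs <;> ring
  simp only [hterm, sum_ite_fin, Finset.sum_const, Finset.card_univ, Fintype.card_fin,
    nsmul_eq_mul]
  field_simp
  ring

/-- For `N ≥ 2`, i.i.d. `U₁,…,U_N` with `E(U₁⁴) < ∞` and i.i.d. square-integrable
`W₁,…,W_N` with `(U₁,…,U_N)` independent of `(W₁,…,W_N)`, setting
`Bᵢ = Uᵢ − Ū`, `Cᵢ = Wᵢ − W̄` and `T = (1/(N−1)) ∑ᵢ (Bᵢ + Cᵢ)·Bᵢ`, it holds that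
`E(T²) ≥ (1/(N−1))·Var(U₁)·Var(W₁)`, where `Var(V) = E(V²) − (E V)²`. -/
theorem stmt10 {Ω : Type*} [MeasurableSpace Ω]
    (μ : Measure Ω) [IsProbabilityMeasure μ]
    (N : ℕ) (hN : 2 ≤ N)
    (U W : Fin N → Ω → ℝ)
    (hUmeas : ∀ i, Measurable (U i)) (hWmeas : ∀ i, Measurable (W i))
    (hUiid : iIndepFun U μ)
    (hUid : ∀ i j, IdentDistrib (U i) (U j) μ μ)
    (hWiid : iIndepFun W μ)
    (hWid : ∀ i j, IdentDistrib (W i) (W j) μ μ)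
    (hU4 : MemLp (U (⟨0, by omega⟩ : Fin N)) 4 μ)
    (hW2 : ∀ i, MemLp (W i) 2 μ)
    (hUW : IndepFun (fun ω i => U i ω) (fun ω i => W i ω) μ)
    (T : Ω → ℝ)
    (hT : T = fun ω => ((N : ℝ) - 1)⁻¹ *
      ∑ i, ((U i ω - (N : ℝ)⁻¹ * ∑ j, U j ω) + (W i ω - (N : ℝ)⁻¹ * ∑ j, W j ω)) *
        (U i ω - (N : ℝ)⁻¹ * ∑ j, U j ω)) :
    ((N : ℝ) - 1)⁻¹ *
        ((∫ ω, (U (⟨0, by omega⟩ : Fin N) ω) ^ 2 ∂μ -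
            (∫ ω, U (⟨0, by omega⟩ : Fin N) ω ∂μ) ^ 2) *
          (∫ ω, (W (⟨0, by omega⟩ : Fin N) ω) ^ 2 ∂μ -
            (∫ ω, W (⟨0, by omega⟩ : Fin N) ω ∂μ) ^ 2)) ≤
      ∫ ω, T ω ^ 2 ∂μ := by
  have hNz : (N:ℝ) ≠ 0 := Nat.cast_ne_zero.mpr (by omega)
  have hN2 : (2:ℝ) ≤ (N:ℝ) := by exact_mod_cast hN
  have hN1 : (0:ℝ) < (N:ℝ) - 1 := by linarith
  have hNm1 : ((N:ℝ) - 1) ≠ 0 := ne_of_gt hN1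
  set i0 : Fin N := ⟨0, by omega⟩ with hi0def
  simp only [pow_two]
  have hUmeasv : Measurable (fun ω (k : Fin N) => U k ω) := measurable_pi_lambda _ hUmeas
  have hWmeasv : Measurable (fun ω (k : Fin N) => W k ω) := measurable_pi_lambda _ hWmeas
  have hU4' : ∀ i, MemLp (U i) 4 μ := fun i => (hUid i0 i).memLp_snd hU4
  have hU2' : ∀ i, MemLp (U i) 2 μ := fun i => (hU4' i).mono_exponent (by norm_num)
  have hB4 : ∀ i, MemLp (fun ω => ctr N (fun k => U k ω) i) 4 μ := by
    intro i
    have hsum : MemLp (fun ω => ∑ j, U j ω) 4 μ := memLp_finset_sum _ fun j _ => hU4' j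
    exact ((hU4' i).sub (hsum.const_mul _))
  have hB2 : ∀ i, MemLp (fun ω => ctr N (fun k => U k ω) i) 2 μ := fun i =>
    (hB4 i).mono_exponent (by norm_num)
  have hC2 : ∀ i, MemLp (fun ω => ctr N (fun k => W k ω) i) 2 μ := by
    intro i
    have hsum : MemLp (fun ω => ∑ j, W j ω) 2 μ := memLp_finset_sum _ fun j _ => hW2 j
    exact ((hW2 i).sub (hsum.const_mul _))
  have hA2 : MemLp (fun ω => ssq N (fun k => U k ω)) 2 μ := by
    exact memLp_finset_sum (μ := μ) Finset.univ
      (f := fun i ω => ctr N (fun k => U k ω) i * ctr N (fun k => U k ω) i)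
      (fun i _ => L4mul (hB4 i) (hB4 i))
  have hIndepC : ∀ (φ ψ : (Fin N → ℝ) → ℝ), Measurable φ → Measurable ψ →
      IndepFun (fun ω => φ (fun k => U k ω)) (fun ω => ψ (fun k => W k ω)) μ :=
    fun φ ψ hφ hψ => hUW.comp hφ hψ
  have hWint : ∀ j, Integrable (W j) μ := fun j =>
    memLp_one_iff_integrable.mp ((hW2 j).mono_exponent (by norm_num))
  have hCint0 : ∀ i, ∫ ω, ctr N (fun k => W k ω) i ∂μ = 0 := by
    intro i
    have hsum : Integrable (fun ω => ∑ j, W j ω) μ := integrable_finset_sum _ fun j _ => hWint j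
    have hsum' : Integrable (fun ω => (N:ℝ)⁻¹ * ∑ j, W j ω) μ := by exact hsum.const_mul _
    have hsplit : ∫ ω, ctr N (fun k => W k ω) i ∂μ
        = ∫ ω, W i ω ∂μ - (N:ℝ)⁻¹ * ∫ ω, ∑ j, W j ω ∂μ := by
      simp only [ctr]
      rw [integral_sub (hWint i) hsum', integral_const_mul]
    rw [hsplit, integral_finset_sum _ (fun j _ => hWint j)]
    have hWeq : ∀ j : Fin N, ∫ ω, W j ω ∂μ = ∫ ω, W i0 ω ∂μ := fun j => (hWid j i0).integral_eq
    simp only [hWeq, Finset.sum_const, Finset.card_univ, Fintype.card_fin, nsmul_eq_mul]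
    rw [inv_mul_cancel_left₀ hNz, sub_self]
  have hmomU := moments_centered μ N (by omega) U hUmeas hUiid hUid hU2' i0
  have hmomW := moments_centered μ N (by omega) W hWmeas hWiid hWid hW2 i0
  have hABi : ∀ i, Integrable (fun ω => ssq N (fun k => U k ω) * ctr N (fun k => U k ω) i) μ :=
    fun i => L2mul hA2 (hB2 i)
  have hCi_int : ∀ i, Integrable (fun ω => ctr N (fun k => W k ω) i) μ := fun i =>
    memLp_one_iff_integrable.mp ((hC2 i).mono_exponent (by norm_num))
  have hcross : ∀ i, Integrable (fun ω =>
      ssq N (fun k => U k ω) * ctr N (fun k => U k ω) i * ctr N (fun k => W k ω) i) μ := by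
    intro i
    exact (hIndepC (fun u => ssq N u * ctr N u i) (fun w => ctr N w i)
      ((ssq_meas N).mul (ctr_meas N i)) (ctr_meas N i)).integrable_mul (hABi i) (hCi_int i)
  have hcross0 : ∀ i, ∫ ω,
      ssq N (fun k => U k ω) * ctr N (fun k => U k ω) i * ctr N (fun k => W k ω) i ∂μ = 0 := by
    intro i
    have h2 : ∫ ω, ssq N (fun k => U k ω) * ctr N (fun k => U k ω) i * ctr N (fun k => W k ω) i ∂μ
        = (∫ ω, ssq N (fun k => U k ω) * ctr N (fun k => U k ω) i ∂μ)
          * ∫ ω, ctr N (fun k => W k ω) i ∂μ :=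
      (hIndepC (fun u => ssq N u * ctr N u i) (fun w => ctr N w i)
        ((ssq_meas N).mul (ctr_meas N i)) (ctr_meas N i)).integral_fun_mul_eq_mul_integral
        (Measurable.aestronglyMeasurable (((ssq_meas N).mul (ctr_meas N i)).comp hUmeasv))
        (Measurable.aestronglyMeasurable ((ctr_meas N i).comp hWmeasv))
    rw [h2, hCint0 i, mul_zero]
  have hBB : ∀ i j, Integrable (fun ω =>
      ctr N (fun k => U k ω) i * ctr N (fun k => U k ω) j) μ := fun i j => L2mul (hB2 i) (hB2 j)
  have hCC : ∀ i j, Integrable (fun ω =>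
      ctr N (fun k => W k ω) i * ctr N (fun k => W k ω) j) μ := fun i j => L2mul (hC2 i) (hC2 j)
  have hSSint : ∀ i j, Integrable (fun ω =>
      ctr N (fun k => U k ω) i * ctr N (fun k => U k ω) j
        * (ctr N (fun k => W k ω) i * ctr N (fun k => W k ω) j)) μ := by
    intro i j
    exact (hIndepC (fun u => ctr N u i * ctr N u j) (fun w => ctr N w i * ctr N w j)
      ((ctr_meas N i).mul (ctr_meas N j)) ((ctr_meas N i).mul (ctr_meas N j))).integrable_mul
      (hBB i j) (hCC i j)
  have hSSval : ∀ i j, ∫ ω, ctr N (fun k => U k ω) i * ctr N (fun k => U k ω) j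
        * (ctr N (fun k => W k ω) i * ctr N (fun k => W k ω) j) ∂μ
      = (∫ ω, ctr N (fun k => U k ω) i * ctr N (fun k => U k ω) j ∂μ)
        * ∫ ω, ctr N (fun k => W k ω) i * ctr N (fun k => W k ω) j ∂μ := by
    intro i j
    exact (hIndepC (fun u => ctr N u i * ctr N u j) (fun w => ctr N w i * ctr N w j)
      ((ctr_meas N i).mul (ctr_meas N j)) ((ctr_meas N i).mul (ctr_meas N j))).integral_fun_mul_eq_mul_integral
      (Measurable.aestronglyMeasurable (((ctr_meas N i).mul (ctr_meas N j)).comp hUmeasv))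
      (Measurable.aestronglyMeasurable (((ctr_meas N i).mul (ctr_meas N j)).comp hWmeasv))
  have hTfun : T = fun ω => ((N:ℝ)-1)⁻¹ * (ssq N (fun k => U k ω)
      + ∑ i, ctr N (fun k => U k ω) i * ctr N (fun k => W k ω) i) := by
    rw [hT]; funext ω
    simp only [ssq, ctr]
    congr 1
    rw [← Finset.sum_add_distrib]
    exact Finset.sum_congr rfl fun i _ => by ring
  simp only [hTfun]
  have hrwAS : (fun ω => ssq N (fun k => U k ω)
        * ∑ i, ctr N (fun k => U k ω) i * ctr N (fun k => W k ω) i)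
      = fun ω => ∑ i, ssq N (fun k => U k ω) * ctr N (fun k => U k ω) i
          * ctr N (fun k => W k ω) i := by
    funext ω; rw [Finset.mul_sum]
    exact Finset.sum_congr rfl fun i _ => by ring
  have hASint : Integrable (fun ω => ssq N (fun k => U k ω)
      * ∑ i, ctr N (fun k => U k ω) i * ctr N (fun k => W k ω) i) μ := by
    rw [hrwAS]; exact integrable_finset_sum _ fun i _ => hcross i
  have hAS0 : ∫ ω, ssq N (fun k => U k ω)
      * ∑ i, ctr N (fun k => U k ω) i * ctr N (fun k => W k ω) i ∂μ = 0 := by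
    rw [hrwAS, integral_finset_sum _ (fun i _ => hcross i)]
    simp only [hcross0, Finset.sum_const_zero]
  have hrwSS : (fun ω => (∑ i, ctr N (fun k => U k ω) i * ctr N (fun k => W k ω) i)
        * ∑ i, ctr N (fun k => U k ω) i * ctr N (fun k => W k ω) i)
      = fun ω => ∑ i, ∑ j, ctr N (fun k => U k ω) i * ctr N (fun k => U k ω) j
          * (ctr N (fun k => W k ω) i * ctr N (fun k => W k ω) j) := by
    funext ω; rw [Finset.sum_mul_sum]
    exact Finset.sum_congr rfl fun i _ => Finset.sum_congr rfl fun j _ => by ring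
  have hSSint2 : Integrable (fun ω => (∑ i, ctr N (fun k => U k ω) i * ctr N (fun k => W k ω) i)
      * ∑ i, ctr N (fun k => U k ω) i * ctr N (fun k => W k ω) i) μ := by
    rw [hrwSS]
    exact integrable_finset_sum _ fun i _ => integrable_finset_sum _ fun j _ => hSSint i j
  set a := ∫ ω, U i0 ω * U i0 ω ∂μ with ha
  set m := ∫ ω, U i0 ω ∂μ with hm
  set a' := ∫ ω, W i0 ω * W i0 ω ∂μ with ha'
  set m' := ∫ ω, W i0 ω ∂μ with hm'
  have hSS : ∫ ω, (∑ i, ctr N (fun k => U k ω) i * ctr N (fun k => W k ω) i)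
        * ∑ i, ctr N (fun k => U k ω) i * ctr N (fun k => W k ω) i ∂μ
      = ((N:ℝ)-1) * ((a - m * m) * (a' - m' * m')) := by
    have hstep : ∑ i : Fin N, ∫ ω, ∑ j, ctr N (fun k => U k ω) i * ctr N (fun k => U k ω) j
          * (ctr N (fun k => W k ω) i * ctr N (fun k => W k ω) j) ∂μ
        = ∑ i : Fin N, ∑ j : Fin N,
            (((if i = j then a else m * m) - (a + ((N:ℝ)-1) * (m * m)) / N)
              * ((if i = j then a' else m' * m') - (a' + ((N:ℝ)-1) * (m' * m')) / N)) := by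
      refine Finset.sum_congr rfl fun i _ => ?_
      rw [integral_finset_sum _ (fun j _ => hSSint i j)]
      refine Finset.sum_congr rfl fun j _ => ?_
      rw [hSSval i j, hmomU i j, hmomW i j]
    rw [hrwSS, integral_finset_sum _
      (fun i _ => integrable_finset_sum _ fun j _ => hSSint i j), hstep]
    exact key_sum N (by omega) _ _ _ _
  have hexpand : (fun ω => ((N:ℝ)-1)⁻¹ * (ssq N (fun k => U k ω)
        + ∑ i, ctr N (fun k => U k ω) i * ctr N (fun k => W k ω) i)
      * (((N:ℝ)-1)⁻¹ * (ssq N (fun k => U k ω)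
        + ∑ i, ctr N (fun k => U k ω) i * ctr N (fun k => W k ω) i)))
      = fun ω => (((N:ℝ)-1)⁻¹ * ((N:ℝ)-1)⁻¹)
            * (ssq N (fun k => U k ω) * ssq N (fun k => U k ω))
          + (2 * (((N:ℝ)-1)⁻¹ * ((N:ℝ)-1)⁻¹)) * (ssq N (fun k => U k ω)
            * ∑ i, ctr N (fun k => U k ω) i * ctr N (fun k => W k ω) i)
          + (((N:ℝ)-1)⁻¹ * ((N:ℝ)-1)⁻¹)
            * ((∑ i, ctr N (fun k => U k ω) i * ctr N (fun k => W k ω) i)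
              * ∑ i, ctr N (fun k => U k ω) i * ctr N (fun k => W k ω) i) :=
    funext fun ω => by ring
  rw [hexpand]
  have hAAint : Integrable (fun ω => ssq N (fun k => U k ω) * ssq N (fun k => U k ω)) μ :=
    L2mul hA2 hA2
  have J1 : Integrable (fun ω => (((N:ℝ)-1)⁻¹ * ((N:ℝ)-1)⁻¹)
      * (ssq N (fun k => U k ω) * ssq N (fun k => U k ω))) μ := by
    exact hAAint.const_mul _
  have J2 : Integrable (fun ω => (2 * (((N:ℝ)-1)⁻¹ * ((N:ℝ)-1)⁻¹)) * (ssq N (fun k => U k ω)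
      * ∑ i, ctr N (fun k => U k ω) i * ctr N (fun k => W k ω) i)) μ := by
    exact hASint.const_mul _
  have J3 : Integrable (fun ω => (((N:ℝ)-1)⁻¹ * ((N:ℝ)-1)⁻¹)
      * ((∑ i, ctr N (fun k => U k ω) i * ctr N (fun k => W k ω) i)
        * ∑ i, ctr N (fun k => U k ω) i * ctr N (fun k => W k ω) i)) μ := by
    exact hSSint2.const_mul _
  have J12 : Integrable (fun ω => (((N:ℝ)-1)⁻¹ * ((N:ℝ)-1)⁻¹)
      * (ssq N (fun k => U k ω) * ssq N (fun k => U k ω))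
      + (2 * (((N:ℝ)-1)⁻¹ * ((N:ℝ)-1)⁻¹)) * (ssq N (fun k => U k ω)
        * ∑ i, ctr N (fun k => U k ω) i * ctr N (fun k => W k ω) i)) μ := by
    exact J1.add J2
  rw [integral_add J12 J3, integral_add J1 J2, integral_const_mul, integral_const_mul,
    integral_const_mul, hAS0, hSS, mul_zero, add_zero]
  have hAA0 : 0 ≤ ∫ ω, ssq N (fun k => U k ω) * ssq N (fun k => U k ω) ∂μ :=
    integral_nonneg fun ω => mul_self_nonneg _
  have e1 : ∀ X : ℝ, ((N:ℝ)-1)⁻¹ * ((N:ℝ)-1)⁻¹ * (((N:ℝ)-1) * X) = ((N:ℝ)-1)⁻¹ * X := by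
    intro X; field_simp
  rw [e1]
  exact le_add_of_nonneg_left (mul_nonneg
    (mul_nonneg (inv_nonneg.mpr (by linarith)) (inv_nonneg.mpr (by linarith))) hAA0)
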